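/- Let V and Q be real vector spaces, H a real Hilbert space, ι : V → H a linear map, and A, C : V × V → ℝ, B : V × Q → ℝ bilinear forms with A(ξ,ζ) = C(ζ,ξ) for all ξ, ζ ∈ V. Let U_ad ⊆ H be a set, θ > 0, f, y_Ω ∈ H, ū, ũ ∈ U_ad and w̄_T ∈ V. Assume: (a) (ȳ, p̄, w̄, q̄, ū) satisfies the optimality system A(ȳ,ξ) − B(ξ,p̄) = ⟨f + ū, ι ξ⟩, C(w̄,ζ) + B(ζ,q̄) = ⟨ι ȳ − y_Ω, ι ζ⟩ for all ξ, ζ ∈ V, B(ȳ,φ) = B(w̄,φ) = 0 for all φ ∈ Q, and ⟨ι w̄ + θ ū, u − ū⟩ ≥ 0 for all u ∈ U_ad; (b) ⟨ι w̄_T + θ ũ, u − ũ⟩ ≥ 0 for all u ∈ U_ad; (c) (ỹ, p̃) satisfies A(ỹ,ξ) − B(ξ,p̃) = ⟨f + ũ, ι ξ⟩ for all ξ ∈ V and B(ỹ,φ) = 0 for all φ ∈ Q; (d) (w̃, q̃) satisfies C(w̃,ζ) + B(ζ,q̃) = ⟨ι ỹ − y_Ω, ι ζ⟩ for all ζ ∈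 V and B(w̃,φ) = 0 for all φ ∈ Q; (e) (ŵ, q̂) ∈ V × Q is arbitrary. Then ‖ū − ũ‖² ≤ (2/θ²) ‖ι(w̃ − ŵ)‖² + (2/θ²) ‖ι(ŵ − w̄_T)‖². -/

import Mathlib

open scoped RealInnerProductSpace

/-- Key estimate for the control error between the optimal control `ū` and the auxiliary
control `ũ`: `‖ū − ũ‖² ≤ (2/θ²)‖ι(w̃ − ŵ)‖² + (2/θ²)‖ι(ŵ − w̄_T)‖²`. -/
theorem stmt_5
    {V Q H : Type*} [AddCommGroup V] [Module ℝ V] [AddCommGroup Q] [Module ℝ Q]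
    [NormedAddCommGroup H] [InnerProductSpace ℝ H] [CompleteSpace H]
    (ι : V →ₗ[ℝ] H)
    (A Cb : V →ₗ[ℝ] V →ₗ[ℝ] ℝ) (B : V →ₗ[ℝ] Q →ₗ[ℝ] ℝ)
    (hAC : ∀ ξ ζ : V, A ξ ζ = Cb ζ ξ)
    (Uad : Set H) (θ : ℝ) (hθ : 0 < θ) (f yΩ : H)
    (ubar utilde : H) (hubar : ubar ∈ Uad) (hutilde : utilde ∈ Uad)
    (wT : V)
    -- (a) the continuous optimality system
    (ybar : V) (pbar : Q) (wbar : V) (qbar : Q)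
    (hst : ∀ ξ : V, A ybar ξ - B ξ pbar = ⟪f + ubar, ι ξ⟫)
    (had : ∀ ζ : V, Cb wbar ζ + B ζ qbar = ⟪ι ybar - yΩ, ι ζ⟫)
    (hydiv : ∀ φ : Q, B ybar φ = 0) (hwdiv : ∀ φ : Q, B wbar φ = 0)
    (hvi : ∀ u ∈ Uad, 0 ≤ ⟪ι wbar + θ • ubar, u - ubar⟫)
    -- (b) the variational inequality for the auxiliary control
    (hvitilde : ∀ u ∈ Uad, 0 ≤ ⟪ι wT + θ • utilde, u - utilde⟫)
    -- (c) the auxiliary state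
    (ytilde : V) (ptilde : Q)
    (hsttilde : ∀ ξ : V, A ytilde ξ - B ξ ptilde = ⟪f + utilde, ι ξ⟫)
    (hytildediv : ∀ φ : Q, B ytilde φ = 0)
    -- (d) the auxiliary adjoint state
    (wtilde : V) (qtilde : Q)
    (hadtilde : ∀ ζ : V, Cb wtilde ζ + B ζ qtilde = ⟪ι ytilde - yΩ, ι ζ⟫)
    (hwtildediv : ∀ φ : Q, B wtilde φ = 0)
    -- (e) an arbitrary pair
    (what : V) (qhat : Q) :
    ‖ubar - utilde‖ ^ 2 ≤
      (2 / θ ^ 2) * ‖ι (wtilde - what)‖ ^ 2 + (2 / θ ^ 2) * ‖ι (what - wT)‖ ^ 2 := by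

  have hew : ∀ φ : Q, B (wbar - wtilde) φ = 0 := by
    intro φ; simp [map_sub, LinearMap.sub_apply, hwdiv φ, hwtildediv φ]
  have heyd : ∀ φ : Q, B (ybar - ytilde) φ = 0 := by
    intro φ; simp [map_sub, LinearMap.sub_apply, hydiv φ, hytildediv φ]
  -- key sign fact
  have hkey : (0:ℝ) ≤ ⟪ubar - utilde, ι (wbar - wtilde)⟫ := by
    have e1 : ⟪ubar - utilde, ι (wbar - wtilde)⟫ = Cb (wbar - wtilde) (ybar - ytilde) := by
      have h1 := hst (wbar - wtilde)
      have h2 := hsttilde (wbar - wtilde)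
      have hb1 := hew pbar
      have hb2 := hew ptilde
      simp only [hAC] at h1 h2
      simp only [map_sub, LinearMap.sub_apply, inner_add_left, inner_sub_left,
        inner_sub_right] at h1 h2 hb1 hb2 ⊢
      linarith
    have e2 : Cb (wbar - wtilde) (ybar - ytilde) = ⟪ι (ybar - ytilde), ι (ybar - ytilde)⟫ := by
      have h3 := had (ybar - ytilde)
      have h4 := hadtilde (ybar - ytilde)
      have hb1 := heyd qbar
      have hb2 := heyd qtilde
      simp only [map_sub, LinearMap.sub_apply, inner_sub_left, inner_sub_right] at h3 h4 hb1 hb2 ⊢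
      linarith
    rw [e1, e2]
    exact real_inner_self_nonneg
  set d := ‖ubar - utilde‖ with hd
  set a := ‖ι (wtilde - what)‖ with ha
  set b := ‖ι (what - wT)‖ with hb
  have h1 := hvi utilde hutilde
  have h2 := hvitilde ubar hubar
  have hsum : θ * d ^ 2 ≤ ⟪ι wbar - ι wT, utilde - ubar⟫ := by
    have e : ⟪ubar - utilde, ubar - utilde⟫ = d ^ 2 := real_inner_self_eq_norm_sq _
    have hc : ⟪ubar, utilde⟫ = ⟪utilde, ubar⟫ := real_inner_comm _ _
    simp only [inner_add_left, real_inner_smul_left, inner_sub_left, inner_sub_right]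
      at h1 h2 e ⊢
    nlinarith [h1, h2, e, hc]
  have hsplit : ⟪ι wbar - ι wT, utilde - ubar⟫ =
      ⟪ι (wbar - wtilde), utilde - ubar⟫ + ⟪ι (wtilde - what), utilde - ubar⟫
        + ⟪ι (what - wT), utilde - ubar⟫ := by
    rw [← inner_add_left, ← inner_add_left]
    congr 1
    simp only [map_sub]
    abel
  have t1 : ⟪ι (wbar - wtilde), utilde - ubar⟫ ≤ 0 := by
    have h := hkey
    rw [real_inner_comm] at h
    have e : ⟪ι (wbar - wtilde), utilde - ubar⟫ = -⟪ι (wbar - wtilde), ubar - utilde⟫ := by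
      rw [← inner_neg_right]
      congr 1
      abel
    rw [e]
    linarith
  have t2 : ⟪ι (wtilde - what), utilde - ubar⟫ ≤ a * d := by
    calc ⟪ι (wtilde - what), utilde - ubar⟫ ≤ ‖ι (wtilde - what)‖ * ‖utilde - ubar‖ :=
          real_inner_le_norm _ _
      _ = a * d := by rw [norm_sub_rev utilde ubar]
  have t3 : ⟪ι (what - wT), utilde - ubar⟫ ≤ b * d := by
    calc ⟪ι (what - wT), utilde - ubar⟫ ≤ ‖ι (what - wT)‖ * ‖utilde - ubar‖ :=
          real_inner_le_norm _ _
      _ = b * d := by rw [norm_sub_rev utilde ubar]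
  have key : θ * d ^ 2 ≤ a * d + b * d := by
    rw [hsplit] at hsum
    linarith
  have hθ2 : (0:ℝ) < θ ^ 2 := by positivity
  rw [div_mul_eq_mul_div, div_mul_eq_mul_div, ← add_div, le_div_iff₀ hθ2]
  nlinarith [key, hθ, sq_nonneg (a + b - θ * d), sq_nonneg (a - b), norm_nonneg (ubar - utilde),
    norm_nonneg (ι (wtilde - what)), norm_nonneg (ι (what - wT))]
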